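/- Let t > 0 and 0 < β < 1. Define a finite sequence by τ₀ = t and τᵢ = (τ₀ + τ₁ + ⋯ + τ_{i-1})^β for i ≥ 1. Then for every i ≥ 1, τᵢ ≤ (2^{β+1})^{i-1} · t^β. -/
import Mathlib


open Real Finset

theorem stmt_1 (t β : ℝ) (ht : 1 ≤ t) (hβ0 : 0 < β) (hβ1 : β < 1)
    (τ : ℕ → ℝ) (h0 : τ 0 = t)
    (hrec : ∀ i : ℕ, 1 ≤ i → τ i = (∑ j ∈ Finset.range i, τ j) ^ β) :
    ∀ i : ℕ, 1 ≤ i → τ i ≤ (2 ^ (β + 1)) ^ (i - 1) * t ^ β := by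
  have htβ : (0:ℝ) < t ^ β := Real.rpow_pos_of_pos (lt_of_lt_of_le one_pos ht) β
  have key : ∀ i : ℕ, 1 ≤ i →
      (1 ≤ ∑ j ∈ Finset.range i, τ j) ∧
      τ i ≤ ((2:ℝ) ^ β) ^ (i - 1) * t ^ β := by
    intro i hi
    induction i, hi using Nat.le_induction with
    | base =>
      constructor
      · simpa [h0] using ht
      · rw [hrec 1 le_rfl]
        simp [h0]
    | succ i hi ih =>
      obtain ⟨hS, hτ⟩ := ih
      have hS0 : (0:ℝ) < ∑ j ∈ Finset.range i, τ j := lt_of_lt_of_le one_pos hS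
      have hτi : τ i = (∑ j ∈ Finset.range i, τ j) ^ β := hrec i hi
      have hτipos : 0 < τ i := by rw [hτi]; exact Real.rpow_pos_of_pos hS0 β
      have hSsucc : ∑ j ∈ Finset.range (i+1), τ j = (∑ j ∈ Finset.range i, τ j) + τ i := by
        rw [Finset.sum_range_succ]
      constructor
      · rw [hSsucc]; linarith
      · have hle : τ i ≤ ∑ j ∈ Finset.range i, τ j := by
          rw [hτi]
          calc (∑ j ∈ Finset.range i, τ j) ^ β ≤ (∑ j ∈ Finset.range i, τ j) ^ (1:ℝ) :=
                Real.rpow_le_rpow_of_exponent_le hS hβ1.le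
            _ = _ := Real.rpow_one _
        have h1 : τ (i+1) ≤ (2 * (∑ j ∈ Finset.range i, τ j)) ^ β := by
          rw [hrec (i+1) (by omega), hSsucc]
          apply Real.rpow_le_rpow (by linarith) (by linarith) hβ0.le
        have h2 : (2 * (∑ j ∈ Finset.range i, τ j)) ^ β
            = 2 ^ β * (∑ j ∈ Finset.range i, τ j) ^ β :=
          Real.mul_rpow (by norm_num) hS0.le
        have h2b : (0:ℝ) < 2 ^ β := Real.rpow_pos_of_pos (by norm_num) β
        calc τ (i+1) ≤ 2 ^ β * τ i := by rw [hτi]; exact h1.trans_eq h2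
          _ ≤ 2 ^ β * (((2:ℝ) ^ β) ^ (i - 1) * t ^ β) := by
              exact mul_le_mul_of_nonneg_left hτ h2b.le
          _ = ((2:ℝ) ^ β) ^ (i + 1 - 1) * t ^ β := by
              have : i + 1 - 1 = (i - 1) + 1 := by omega
              rw [this, pow_succ]; ring
  intro i hi
  refine (key i hi).2.trans ?_
  apply mul_le_mul_of_nonneg_right _ htβ.le
  apply pow_le_pow_left₀ (Real.rpow_pos_of_pos (by norm_num) β).le
  exact Real.rpow_le_rpow_of_exponent_le (by norm_num) (by linarith)
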